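/- Let F : (0, 1/2) → ℝ be defined by F(y) = (f*_{4,1}(y)/W(y;4)) · (G̃_4(y)/c_{12}(y)) - d/dy [ c_{21}(y) f*_{4,1}(y)^2 / (W(y;4) c_{12}(y)) ], where f*_{4,1}(y) = 1/(5y^2 + 3h(y)^2)^3 with h(y) = sqrt(2+y^2) - 2, c_{12}(y) = (h(y)^2 - y^2)/(1 - h'(y)^2), c_{21}(y) = 2(h(y)h'(y) - y)/(1 - h'(y)^2), G̃_4(y) = c_{21}(y)[f*_{4,1}]'(y) + (c_{20}(y) - 12) f*_{4,1}(y) with c_{20} the d=7 coefficient of the hyperboloidal wave operator, and W(y;4) = ((y^2+1)(1-4y^2)^{-4}(3√(y^2+2) - y + 4)^2(3√(y^2+2) + y + 4)^2)/(y^6 √(y^2+2) √(y^2 + 2√(y^2+2) + 3)). Then lim_{y→0^+} F(y) = 0 and there exists δ_0 > 0 such that F(y) > 0 for all y ∈ (0, δ_0). -/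

import Mathlib

/-- The height function `h(y) = √(2+y²) - 2`. -/
noncomputable def hFun (y : ℝ) : ℝ := Real.sqrt (2 + y ^ 2) - 2

/-- `c₁₂(y) = (h² - y²)/(1 - h'²)`. -/
noncomputable def c12 (y : ℝ) : ℝ :=
  (hFun y ^ 2 - y ^ 2) / (1 - (deriv hFun y) ^ 2)

/-- `c₂₁(y) = 2(h h' - y)/(1 - h'²)`. -/
noncomputable def c21 (y : ℝ) : ℝ :=
  2 * (hFun y * deriv hFun y - y) / (1 - (deriv hFun y) ^ 2)

/-- The coefficient `c₂₀(y)` of the hyperboloidal wave operator in `d = 7`. -/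
noncomputable def c20 (y : ℝ) : ℝ :=
  -1 - (6 / y) * ((y * deriv hFun y - hFun y) * deriv hFun y) / (1 - (deriv hFun y) ^ 2)
    + ((y ^ 2 - hFun y ^ 2) / (1 - (deriv hFun y) ^ 2)) *
        (deriv (deriv hFun) y / (y * deriv hFun y - hFun y))

/-- The first component of the unstable eigenfunction, `f*₄₁(y) = 1/(5y² + 3h(y)²)³`. -/
noncomputable def f41 (y : ℝ) : ℝ := 1 / (5 * y ^ 2 + 3 * hFun y ^ 2) ^ 3

/-- `G̃₄(y) = c₂₁ (f*₄₁)' + (c₂₀ - 12) f*₄₁`. -/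
noncomputable def Gtilde4 (y : ℝ) : ℝ :=
  c21 y * deriv f41 y + (c20 y - 12) * f41 y

/-- The explicit Wronskian expression `W(y;4)`. -/
noncomputable def W4 (y : ℝ) : ℝ :=
  ((y ^ 2 + 1) * (1 - 4 * y ^ 2) ^ (-4 : ℤ) *
      (3 * Real.sqrt (y ^ 2 + 2) - y + 4) ^ 2 * (3 * Real.sqrt (y ^ 2 + 2) + y + 4) ^ 2) /
    (y ^ 6 * Real.sqrt (y ^ 2 + 2) * Real.sqrt (y ^ 2 + 2 * Real.sqrt (y ^ 2 + 2) + 3))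

/-- The function `F` from the nonvanishing-of-the-Riesz-projection argument. -/
noncomputable def Ffun (y : ℝ) : ℝ :=
  f41 y / W4 y * (Gtilde4 y / c12 y)
    - deriv (fun z : ℝ => c21 z * (f41 z) ^ 2 / (W4 z * c12 z)) y

lemma two_add_sq_pos (y : ℝ) : (0:ℝ) < 2 + y ^ 2 := by positivity

lemma sq_sqrtS (y : ℝ) : Real.sqrt (2 + y ^ 2) ^ 2 = 2 + y ^ 2 :=
  Real.sq_sqrt (two_add_sq_pos y).le

lemma sqrtS_pos (y : ℝ) : 0 < Real.sqrt (2 + y ^ 2) :=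
  Real.sqrt_pos.mpr (two_add_sq_pos y)

lemma hasDerivAt_S (y : ℝ) :
    HasDerivAt (fun z : ℝ => Real.sqrt (2 + z ^ 2)) (y / Real.sqrt (2 + y ^ 2)) y := by
  have h1 : HasDerivAt (fun z : ℝ => 2 + z ^ 2) (2 * y) y := by
    simpa using (hasDerivAt_pow 2 y).const_add 2
  have h2 := (Real.hasDerivAt_sqrt (two_add_sq_pos y).ne').comp y h1
  convert! h2 using 1
  field_simp

lemma deriv_hFun (y : ℝ) :
    HasDerivAt hFun (y / Real.sqrt (2 + y ^ 2)) y := by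
  exact (hasDerivAt_S y).sub_const 2

lemma deriv_hFun_eq : deriv hFun = fun y => y / Real.sqrt (2 + y ^ 2) :=
  funext fun y => (deriv_hFun y).deriv

lemma deriv2_hFun (y : ℝ) :
    deriv (deriv hFun) y = 2 / Real.sqrt (2 + y ^ 2) ^ 3 := by
  rw [deriv_hFun_eq]
  have hs := sqrtS_pos y
  have h2 := sq_sqrtS y
  have hd : HasDerivAt (fun z : ℝ => z / Real.sqrt (2 + z ^ 2))
      ((Real.sqrt (2 + y ^ 2) - y * (y / Real.sqrt (2 + y ^ 2))) / (Real.sqrt (2 + y ^ 2)) ^ 2) y := by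
    simpa using! (hasDerivAt_id y).div (hasDerivAt_S y) hs.ne'
  rw [hd.deriv]
  field_simp
  nlinarith [hs, h2]

lemma S_lower (y : ℝ) : 1 < Real.sqrt (2 + y ^ 2) := by
  nlinarith [sq_sqrtS y, sqrtS_pos y]

lemma denom_pos (y : ℝ) : 0 < 4 * y ^ 2 - 6 * Real.sqrt (2 + y ^ 2) + 9 := by
  nlinarith [sq_sqrtS y, sqrtS_pos y]

lemma Dfun_eq (y : ℝ) : 5 * y ^ 2 + 3 * hFun y ^ 2
    = 2 * (4 * y ^ 2 - 6 * Real.sqrt (2 + y ^ 2) + 9) := by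
  simp only [hFun]
  linear_combination 3 * sq_sqrtS y

lemma Dfun_pos (y : ℝ) : 0 < 5 * y ^ 2 + 3 * hFun y ^ 2 := by
  rw [Dfun_eq]; linarith [denom_pos y]

lemma hasDerivAt_f41 (y : ℝ) :
    HasDerivAt f41 (-3 * y * (4 * Real.sqrt (2 + y ^ 2) - 3) /
      (4 * Real.sqrt (2 + y ^ 2) * (4 * y ^ 2 - 6 * Real.sqrt (2 + y ^ 2) + 9) ^ 4)) y := by
  set s := Real.sqrt (2 + y ^ 2) with hsdef
  have hs : 0 < s := sqrtS_pos y
  have hD : HasDerivAt (fun z : ℝ => 5 * z ^ 2 + 3 * hFun z ^ 2)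
      (10 * y + 6 * hFun y * (y / s)) y := by
    have h1 : HasDerivAt (fun z : ℝ => 5 * z ^ 2) (10 * y) y := by
      have h := (hasDerivAt_pow 2 y).const_mul (5:ℝ)
      convert! h using 1 <;> push_cast <;> ring
    have h3 : HasDerivAt (fun z : ℝ => 3 * hFun z ^ 2) (6 * hFun y * (y / s)) y := by
      have h := ((deriv_hFun y).pow 2).const_mul (3:ℝ)
      convert! h using 1
      push_cast; ring
    exact h1.add h3
  have hDy : (5 * y ^ 2 + 3 * hFun y ^ 2) ≠ 0 := (Dfun_pos y).ne'
  have hpow : HasDerivAt (fun z : ℝ => (5 * z ^ 2 + 3 * hFun z ^ 2) ^ 3)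
      (3 * (5 * y ^ 2 + 3 * hFun y ^ 2) ^ 2 * (10 * y + 6 * hFun y * (y / s))) y := by
    simpa using! hD.pow 3
  have hinv := hpow.inv (pow_ne_zero 3 hDy)
  have h41 : f41 = fun z : ℝ => ((5 * z ^ 2 + 3 * hFun z ^ 2) ^ 3)⁻¹ := by
    funext z; simp [f41, one_div]
  rw [h41]
  convert! hinv using 1
  have hden := denom_pos y
  have hE := Dfun_eq y
  have hh : hFun y = s - 2 := rfl
  rw [hh] at hE ⊢
  rw [hE]
  rw [← hsdef] at hden
  field_simp
  ring

lemma one_sub_dh_sq (y : ℝ) :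
    1 - (deriv hFun y) ^ 2 = 2 / Real.sqrt (2 + y ^ 2) ^ 2 := by
  rw [(deriv_hFun y).deriv]
  have hs := (sqrtS_pos y).ne'
  field_simp
  linarith [sq_sqrtS y]

lemma c12_eq (y : ℝ) :
    c12 y = (3 - 2 * Real.sqrt (2 + y ^ 2)) * Real.sqrt (2 + y ^ 2) ^ 2 := by
  have hs := (sqrtS_pos y).ne'
  have h2 := sq_sqrtS y
  rw [c12, one_sub_dh_sq]
  show ((Real.sqrt (2 + y ^ 2) - 2) ^ 2 - y ^ 2) / _ = _
  field_simp
  linear_combination h2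

lemma c21_eq (y : ℝ) :
    c21 y = -2 * y * Real.sqrt (2 + y ^ 2) := by
  have hs := (sqrtS_pos y).ne'
  have h2 := sq_sqrtS y
  rw [c21, one_sub_dh_sq, (deriv_hFun y).deriv]
  show 2 * ((Real.sqrt (2 + y ^ 2) - 2) * (y / Real.sqrt (2 + y ^ 2)) - y) / _ = _
  field_simp
  ring

lemma c20_eq (y : ℝ) (hy : y ≠ 0) :
    c20 y = -1 - 6 * (Real.sqrt (2 + y ^ 2) - 1)
      + (2 * Real.sqrt (2 + y ^ 2) - 3) / (Real.sqrt (2 + y ^ 2) - 1) := by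
  have hs := (sqrtS_pos y).ne'
  have h2 := sq_sqrtS y
  have h1 : Real.sqrt (2 + y ^ 2) - 1 ≠ 0 := by have := S_lower y; linarith
  rw [c20, one_sub_dh_sq, (deriv_hFun y).deriv, deriv2_hFun]
  show -1 - (6 / y) * ((y * (y / Real.sqrt (2 + y ^ 2)) - (Real.sqrt (2 + y ^ 2) - 2)) * (y / Real.sqrt (2 + y ^ 2))) / _
      + ((y ^ 2 - (Real.sqrt (2 + y ^ 2) - 2) ^ 2) / _) * (_ / (y * (y / Real.sqrt (2 + y ^ 2)) - (Real.sqrt (2 + y ^ 2) - 2))) = _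
  have hyh : y * (y / Real.sqrt (2 + y ^ 2)) - (Real.sqrt (2 + y ^ 2) - 2)
      = 2 * (Real.sqrt (2 + y ^ 2) - 1) / Real.sqrt (2 + y ^ 2) := by
    field_simp
    linear_combination - h2
  rw [hyh]
  field_simp
  linear_combination (-1 : ℝ) * h2

lemma sqrt_shift (y : ℝ) :
    Real.sqrt (y ^ 2 + 2 * Real.sqrt (y ^ 2 + 2) + 3) = Real.sqrt (2 + y ^ 2) + 1 := by
  have hc : Real.sqrt (y ^ 2 + 2) = Real.sqrt (2 + y ^ 2) := by rw [add_comm]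
  have h2 := sq_sqrtS y
  have : y ^ 2 + 2 * Real.sqrt (y ^ 2 + 2) + 3 = (Real.sqrt (2 + y ^ 2) + 1) ^ 2 := by
    rw [hc]; linear_combination - h2
  rw [this, Real.sqrt_sq (by positivity)]

lemma W4_eq (y : ℝ) (hy0 : 0 < y) (hy : y < 1/2) :
    W4 y = ((y ^ 2 + 1) * (4 * (4 * y ^ 2 + 12 * Real.sqrt (2 + y ^ 2) + 17) ^ 2)) /
      ((1 - 4 * y ^ 2) ^ 4 *
        (y ^ 6 * Real.sqrt (2 + y ^ 2) * (Real.sqrt (2 + y ^ 2) + 1))) := by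
  have hc : Real.sqrt (y ^ 2 + 2) = Real.sqrt (2 + y ^ 2) := by rw [add_comm]
  have h2 := sq_sqrtS y
  have hs := sqrtS_pos y
  have hq : (1:ℝ) - 4 * y ^ 2 > 0 := by nlinarith
  rw [W4, sqrt_shift, hc]
  rw [show ((-4:ℤ) = -(4:ℕ)) from rfl, zpow_neg, zpow_natCast]
  have hq' : (1:ℝ) - y ^ 2 * 4 ≠ 0 := by linarith
  rw [div_eq_div_iff (by positivity) (by positivity)]
  field_simp
  linear_combination 9 * ((3 * Real.sqrt (2 + y ^ 2) + 4) ^ 2 - y ^ 2 + 2 * (4 * y ^ 2 + 12 * Real.sqrt (2 + y ^ 2) + 17)) * h2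

noncomputable def qF (y : ℝ) : ℝ :=
  (Real.sqrt (2 + y ^ 2) + 1) * (1 - 4 * y ^ 2) ^ 4 /
    (32 * (4 * y ^ 2 - 6 * Real.sqrt (2 + y ^ 2) + 9) ^ 3 * (y ^ 2 + 1) *
      (4 * y ^ 2 + 12 * Real.sqrt (2 + y ^ 2) + 17) ^ 2 * (3 - 2 * Real.sqrt (2 + y ^ 2)) *
      Real.sqrt (2 + y ^ 2))

noncomputable def GGF (y : ℝ) : ℝ :=
  3 * y ^ 2 * (4 * Real.sqrt (2 + y ^ 2) - 3) / (2 * (4 * y ^ 2 - 6 * Real.sqrt (2 + y ^ 2) + 9) ^ 4)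
    + (-7 - 6 * Real.sqrt (2 + y ^ 2) + (2 * Real.sqrt (2 + y ^ 2) - 3) / (Real.sqrt (2 + y ^ 2) - 1)) /
      (8 * (4 * y ^ 2 - 6 * Real.sqrt (2 + y ^ 2) + 9) ^ 3)

noncomputable def gF (y : ℝ) : ℝ :=
  -2 * Real.sqrt (2 + y ^ 2) * qF y / (8 * (4 * y ^ 2 - 6 * Real.sqrt (2 + y ^ 2) + 9) ^ 3)

lemma f41_eq (y : ℝ) : f41 y = 1 / (8 * (4 * y ^ 2 - 6 * Real.sqrt (2 + y ^ 2) + 9) ^ 3) := by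
  rw [f41, Dfun_eq]; ring_nf

lemma three_sub_pos (y : ℝ) (hy0 : 0 < y) (hy : y < 1/2) :
    0 < 3 - 2 * Real.sqrt (2 + y ^ 2) := by
  nlinarith [sq_sqrtS y, sqrtS_pos y]

lemma Gt_eq (y : ℝ) (hy0 : 0 < y) (hy : y < 1/2) : Gtilde4 y = GGF y := by
  have h2 := sq_sqrtS y
  have hs := sqrtS_pos y
  have h1 : (1:ℝ) < Real.sqrt (2 + y ^ 2) := S_lower y
  have hd := denom_pos y
  rw [Gtilde4, c21_eq, c20_eq y hy0.ne', (hasDerivAt_f41 y).deriv, f41_eq, GGF]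
  field_simp
  ring

lemma key2 (z : ℝ) (hz0 : 0 < z) (hz : z < 1/2) :
    c21 z * (f41 z) ^ 2 / (W4 z * c12 z) = z ^ 7 * gF z := by
  have h2 := sq_sqrtS z
  have hs := sqrtS_pos z
  have h1 : (1:ℝ) < Real.sqrt (2 + z ^ 2) := S_lower z
  have hd := denom_pos z
  have h3 := three_sub_pos z hz0 hz
  have hq : (0:ℝ) < 1 - 4 * z ^ 2 := by nlinarith
  rw [c21_eq, c12_eq, f41_eq, W4_eq z hz0 hz, gF, qF]
  set s := Real.sqrt (2 + z ^ 2) with hsdef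
  set A := 4 * z ^ 2 - 6 * s + 9 with hA
  set B := 4 * z ^ 2 + 12 * s + 17 with hB
  have hBpos : 0 < B := by rw [hB]; positivity
  have hApos : 0 < A := hd
  have hspos : 0 < s := hs
  have hz1 : (0:ℝ) < z ^ 2 + 1 := by positivity
  field_simp
  ring

lemma key1 (y : ℝ) (hy0 : 0 < y) (hy : y < 1/2) :
    f41 y / W4 y * (Gtilde4 y / c12 y) = y ^ 6 * (qF y * GGF y) := by
  have h2 := sq_sqrtS y
  have hs := sqrtS_pos y
  have h1 : (1:ℝ) < Real.sqrt (2 + y ^ 2) := S_lower y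
  have hd := denom_pos y
  have h3 := three_sub_pos y hy0 hy
  have hq : (0:ℝ) < 1 - 4 * y ^ 2 := by nlinarith
  rw [Gt_eq y hy0 hy, c12_eq, f41_eq, W4_eq y hy0 hy, qF, GGF]
  set s := Real.sqrt (2 + y ^ 2) with hsdef
  set A := 4 * y ^ 2 - 6 * s + 9 with hA
  set B := 4 * y ^ 2 + 12 * s + 17 with hB
  have hBpos : 0 < B := by rw [hB]; positivity
  have hApos : 0 < A := hd
  have hs1 : s - 1 ≠ 0 := by linarith
  have hy1 : (0:ℝ) < y ^ 2 + 1 := by positivity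
  field_simp
  ring

lemma contDiff_S : ContDiff ℝ 1 (fun y : ℝ => Real.sqrt (2 + y ^ 2)) := by
  rw [contDiff_iff_contDiffAt]
  intro y
  exact ContDiffAt.sqrt (by fun_prop) (two_add_sq_pos y).ne'

def U : Set ℝ := Set.Ioo (-(1:ℝ)/2) (1/2)

lemma U_open : IsOpen U := isOpen_Ioo

lemma mem_U {y : ℝ} (h : y ∈ U) : -(1:ℝ)/2 < y ∧ y < 1/2 := ⟨h.1, h.2⟩

lemma three_sub_pos' (y : ℝ) (hy : y ∈ U) : 0 < 3 - 2 * Real.sqrt (2 + y ^ 2) := by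
  obtain ⟨h1, h2⟩ := mem_U hy
  nlinarith [sq_sqrtS y, sqrtS_pos y]

lemma contDiff_A : ContDiff ℝ 1 (fun y : ℝ => 4 * y ^ 2 - 6 * Real.sqrt (2 + y ^ 2) + 9) :=
  (((by fun_prop : ContDiff ℝ 1 fun y : ℝ => 4 * y ^ 2).sub
    (contDiff_const.mul contDiff_S)).add contDiff_const)

lemma contDiff_B : ContDiff ℝ 1 (fun y : ℝ => 4 * y ^ 2 + 12 * Real.sqrt (2 + y ^ 2) + 17) :=
  (((by fun_prop : ContDiff ℝ 1 fun y : ℝ => 4 * y ^ 2).add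
    (contDiff_const.mul contDiff_S)).add contDiff_const)

lemma contDiff_C : ContDiff ℝ 1 (fun y : ℝ => 3 - 2 * Real.sqrt (2 + y ^ 2)) :=
  contDiff_const.sub (contDiff_const.mul contDiff_S)

lemma qF_denom_ne (y : ℝ) (hy : y ∈ U) :
    32 * (4 * y ^ 2 - 6 * Real.sqrt (2 + y ^ 2) + 9) ^ 3 * (y ^ 2 + 1) *
      (4 * y ^ 2 + 12 * Real.sqrt (2 + y ^ 2) + 17) ^ 2 * (3 - 2 * Real.sqrt (2 + y ^ 2)) *
      Real.sqrt (2 + y ^ 2) ≠ 0 := by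
  have := three_sub_pos' y hy
  have := denom_pos y
  have := sqrtS_pos y
  positivity

lemma contDiffOn_qF : ContDiffOn ℝ 1 qF U := by
  apply ContDiffOn.div
  · exact ((contDiff_S.add contDiff_const).mul (by fun_prop)).contDiffOn
  · exact ((((((contDiff_const.mul (contDiff_A.pow 3)).mul (by fun_prop)).mul
      (contDiff_B.pow 2)).mul contDiff_C).mul contDiff_S)).contDiffOn
  · exact qF_denom_ne

lemma contDiffOn_gF : ContDiffOn ℝ 1 gF U := by
  apply ContDiffOn.div
  · exact ((contDiff_const.mul contDiff_S).contDiffOn.mul contDiffOn_qF)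
  · exact (contDiff_const.mul (contDiff_A.pow 3)).contDiffOn
  · intro y hy
    have := denom_pos y
    positivity

lemma gF_differentiableAt {y : ℝ} (hy : y ∈ U) : DifferentiableAt ℝ gF y :=
  ((contDiffOn_gF.contDiffAt (U_open.mem_nhds hy)).differentiableAt one_ne_zero)

lemma continuousOn_deriv_gF : ContinuousOn (deriv gF) U :=
  contDiffOn_gF.continuousOn_deriv_of_isOpen U_open le_rfl

lemma contDiffOn_GGF : ContDiffOn ℝ 1 GGF U := by
  apply ContDiffOn.add
  · apply ContDiffOn.div
    · exact (by fun_prop : ContDiff ℝ 1 fun y:ℝ => 3*y^2).contDiffOn.mul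
        ((contDiff_const.mul contDiff_S).sub contDiff_const).contDiffOn
    · exact (contDiff_const.mul (contDiff_A.pow 4)).contDiffOn
    · intro y hy; have := denom_pos y; positivity
  · apply ContDiffOn.div
    · apply ContDiffOn.add
      · exact (contDiff_const.sub (contDiff_const.mul contDiff_S)).contDiffOn
      · apply ContDiffOn.div
        · exact ((contDiff_const.mul contDiff_S).sub contDiff_const).contDiffOn
        · exact (contDiff_S.sub contDiff_const).contDiffOn
        · intro y hy; have := S_lower y; intro h; linarith [h]
    · exact (contDiff_const.mul (contDiff_A.pow 3)).contDiffOn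
    · intro y hy; have := denom_pos y; positivity

noncomputable def Phi (y : ℝ) : ℝ := qF y * GGF y - 7 * gF y - y * deriv gF y

lemma continuousOn_Phi : ContinuousOn Phi U := by
  apply ContinuousOn.sub
  apply ContinuousOn.sub
  · exact contDiffOn_qF.continuousOn.mul contDiffOn_GGF.continuousOn
  · exact continuousOn_const.mul contDiffOn_gF.continuousOn
  · exact continuousOn_id.mul continuousOn_deriv_gF

lemma Ffun_eq (y : ℝ) (hy0 : 0 < y) (hy : y < 1/2) : Ffun y = y ^ 6 * Phi y := by
  have hyU : y ∈ U := ⟨by norm_num; linarith, hy⟩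
  have hmem : Set.Ioo (0:ℝ) (1/2) ∈ nhds y := (isOpen_Ioo).mem_nhds ⟨hy0, hy⟩
  have hEq : (fun z : ℝ => c21 z * (f41 z) ^ 2 / (W4 z * c12 z))
      =ᶠ[nhds y] fun z => z ^ 7 * gF z := by
    filter_upwards [hmem] with z hz
    exact key2 z hz.1 hz.2
  have hdg : HasDerivAt (fun z : ℝ => z ^ 7 * gF z)
      ((7:ℕ) * y ^ 6 * gF y + y ^ 7 * deriv gF y) y :=
    (hasDerivAt_pow 7 y).mul (gF_differentiableAt hyU).hasDerivAt
  have hderiv : deriv (fun z : ℝ => c21 z * (f41 z) ^ 2 / (W4 z * c12 z)) y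
      = 7 * y ^ 6 * gF y + y ^ 7 * deriv gF y := by
    rw [hEq.deriv_eq, hdg.deriv]; norm_num
  rw [Ffun, hderiv, key1 y hy0 hy, Phi]
  ring

lemma sqrt2_bounds : (1:ℝ) < Real.sqrt 2 ∧ Real.sqrt 2 < 3/2 := by
  have h : Real.sqrt 2 ^ 2 = 2 := Real.sq_sqrt (by norm_num)
  have hp : 0 < Real.sqrt 2 := Real.sqrt_pos.mpr (by norm_num)
  constructor <;> nlinarith

lemma Phi_zero_pos : 0 < Phi 0 := by
  have h0 : Real.sqrt (2 + (0:ℝ) ^ 2) = Real.sqrt 2 := by norm_num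
  have hr2 : Real.sqrt 2 ^ 2 = 2 := Real.sq_sqrt (by norm_num)
  obtain ⟨hr1, hr3⟩ := sqrt2_bounds
  have hrp : (0:ℝ) < Real.sqrt 2 := by linarith
  set r := Real.sqrt 2 with hrdef
  have key : Phi 0 = ((r + 1) * (7 * r - 6)) /
      (256 * (9 - 6 * r) ^ 6 * (12 * r + 17) ^ 2 * (3 - 2 * r) * r) := by
    rw [Phi, qF, GGF, gF, qF, h0]
    have h9 : (0:ℝ) < 9 - 6 * r := by linarith
    have h32 : (0:ℝ) < 3 - 2 * r := by linarith
    have hr1' : r - 1 ≠ 0 := by intro h; nlinarith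
    have e1 : (2 * r - 3) / (r - 1) = 1 - r := by
      rw [div_eq_iff hr1']; linear_combination hr2
    norm_num [e1]
    have n1 : -(6*r) + 9 ≠ 0 := by intro h; nlinarith
    have n2 : 12*r + 17 ≠ 0 := by positivity
    have n3 : 3 - 2*r ≠ 0 := h32.ne'
    have n4 : r ≠ 0 := hrp.ne'
    have n5 : 9 - 6*r ≠ 0 := by intro h; nlinarith
    field_simp
    ring
  rw [key]
  have h9 : (0:ℝ) < 9 - 6 * r := by linarith
  have h32 : (0:ℝ) < 3 - 2 * r := by linarith
  have h76 : (0:ℝ) < 7 * r - 6 := by linarith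
  positivity

/-- `F(y) → 0` as `y → 0⁺`, and `F > 0` on an interval `(0, δ₀)`. -/
theorem Ffun_limit_zero_and_positive :
    Filter.Tendsto Ffun (nhdsWithin 0 (Set.Ioi 0)) (nhds 0)
    ∧ ∃ δ0 : ℝ, 0 < δ0 ∧ ∀ y ∈ Set.Ioo (0 : ℝ) δ0, 0 < Ffun y := by
  have h0U : (0:ℝ) ∈ U := by constructor <;> norm_num
  have hcont : ContinuousAt Phi 0 := continuousOn_Phi.continuousAt (U_open.mem_nhds h0U)
  have hev : ∀ᶠ y in nhds 0, 0 < Phi y := hcont.eventually (lt_mem_nhds Phi_zero_pos)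
  obtain ⟨δ1, hδ1, hball⟩ := Metric.eventually_nhds_iff.mp hev
  have hmemIoi : Set.Ioo (0:ℝ) (1/2) ∈ nhdsWithin 0 (Set.Ioi 0) :=
    Ioo_mem_nhdsGT_of_mem ⟨le_refl 0, by norm_num⟩
  have hEq : Ffun =ᶠ[nhdsWithin 0 (Set.Ioi 0)] fun y => y ^ 6 * Phi y := by
    filter_upwards [hmemIoi] with y hy
    exact Ffun_eq y hy.1 hy.2
  constructor
  · have ht : Filter.Tendsto (fun y : ℝ => y ^ 6 * Phi y) (nhds 0) (nhds (0 ^ 6 * Phi 0)) :=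
      ((continuousAt_id.pow 6).mul hcont)
    have ht0 : Filter.Tendsto (fun y : ℝ => y ^ 6 * Phi y) (nhdsWithin 0 (Set.Ioi 0)) (nhds 0) := by
      have : (0:ℝ) ^ 6 * Phi 0 = 0 := by norm_num
      rw [this] at ht
      exact ht.mono_left nhdsWithin_le_nhds
    exact ht0.congr' hEq.symm
  · refine ⟨min δ1 (1/2), by positivity, fun y hy => ?_⟩
    obtain ⟨hy0, hy1⟩ := hy
    have hy2 : y < 1/2 := lt_of_lt_of_le hy1 (min_le_right _ _)
    have hyd : dist y 0 < δ1 := by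
      rw [Real.dist_eq, sub_zero, abs_of_pos hy0]
      exact lt_of_lt_of_le hy1 (min_le_left _ _)
    rw [Ffun_eq y hy0 hy2]
    exact mul_pos (by positivity) (hball hyd)
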